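/- Fix k ≥ 1 and for t ∈ ℕ let i(t) be the number of integer arrays (x_{i,j}) ∈ ℤ^{2k}, indexed by i ∈ {1,2} and j ∈ {1,…,k}, satisfying 0 ≤ x_{i,j} ≤ t for all i,j and x_{i,j} ≤ x_{i',j'} whenever j < j'. (This is the Ehrhart counting function of the order polytope O(P_k) of the ordinal sum P_k of k two-element antichains.) Then in the ring of formal power series ℚ⟦z⟧ one has (1 − z)^{2k+1} · Σ_{t ≥ 0} i(t)·z^t = (1 + z)^k; that is, the h*-polynomial of O(P_k) is (1+z)^k. -/

import Mathlib

open Finset PowerSeries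

noncomputable def FF (k : ℕ) (t : ℤ) : Finset (Fin 2 → Fin k → ℤ) :=
  (Fintype.piFinset fun _ : Fin 2 => Fintype.piFinset fun _ : Fin k => Finset.Icc (0:ℤ) t).filter
    (fun x => ∀ a (j : Fin k) a' j', j < j' → x a j ≤ x a' j')

lemma mem_FF {k : ℕ} {t : ℤ} {x : Fin 2 → Fin k → ℤ} :
    x ∈ FF k t ↔ (∀ a j, 0 ≤ x a j ∧ x a j ≤ t) ∧
      ∀ a j a' j', j < j' → x a j ≤ x a' j' := by
  simp [FF, Fintype.mem_piFinset, forall_and, and_assoc]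

lemma FF_zero_card (t : ℤ) : (FF 0 t).card = 1 := by
  rw [Finset.card_eq_one]
  refine ⟨fun _ j => j.elim0, ?_⟩
  ext x
  simp only [Finset.mem_singleton, mem_FF]
  constructor
  · intro _; funext a j; exact j.elim0
  · rintro rfl; exact ⟨fun a j => j.elim0, fun a j => j.elim0⟩

lemma FF_fiber_card (k : ℕ) (t : ℤ) (p : Fin 2 → ℤ) (hp : ∀ a, 0 ≤ p a ∧ p a ≤ t) :
    ((FF (k+1) t).filter (fun x => (fun a => x a (Fin.last k)) = p)).card
      = (FF k (min (p 0) (p 1))).card := by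
  apply Finset.card_nbij' (i := fun x a => Fin.init (x a)) (j := fun y a => Fin.snoc (y a) (p a))
  · intro x hx
    simp only [Finset.mem_coe, Finset.mem_filter, mem_FF] at hx
    obtain ⟨⟨hb, hc⟩, hl⟩ := hx
    rw [Finset.mem_coe, mem_FF]
    have hle : ∀ a (j : Fin k) a', x a j.castSucc ≤ p a' := by
      intro a j a'
      have := hc a j.castSucc a' (Fin.last k) (Fin.castSucc_lt_last j)
      rw [show x a' (Fin.last k) = p a' from congrFun hl a'] at this
      exact this
    refine ⟨fun a j => ⟨(hb a j.castSucc).1, le_min (hle a j 0) (hle a j 1)⟩, ?_⟩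
    intro a j a' j' hjj'
    exact hc a j.castSucc a' j'.castSucc (by simpa using hjj')
  · intro y hy
    rw [Finset.mem_coe, mem_FF] at hy
    obtain ⟨hb, hc⟩ := hy
    have hmt : min (p 0) (p 1) ≤ t := le_trans (min_le_left _ _) (hp 0).2
    simp only [Finset.mem_coe, Finset.mem_filter, mem_FF]
    refine ⟨⟨?_, ?_⟩, ?_⟩
    · intro a j
      refine Fin.lastCases ?_ (fun j0 => ?_) j
      · simpa using hp a
      · simp only [Fin.snoc_castSucc]
        exact ⟨(hb a j0).1, le_trans (hb a j0).2 hmt⟩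
    · intro a j a' j' hjj'
      revert hjj'
      refine Fin.lastCases ?_ (fun j'0 => ?_) j' <;> intro hjj'
      · obtain ⟨j0, rfl⟩ := Fin.eq_castSucc_of_ne_last (Fin.ne_last_of_lt hjj')
        simp only [Fin.snoc_castSucc, Fin.snoc_last]
        refine le_trans (hb a j0).2 ?_
        fin_cases a' <;> simp
      · obtain ⟨j0, rfl⟩ := Fin.eq_castSucc_of_ne_last (Fin.ne_last_of_lt (lt_trans hjj' (Fin.castSucc_lt_last j'0)))
        simp only [Fin.snoc_castSucc]
        exact hc a j0 a' j'0 (by simpa using hjj')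
    · funext a; simp
  · intro x hx
    simp only [Finset.mem_coe, Finset.mem_filter] at hx
    funext a
    beta_reduce
    rw [show p a = x a (Fin.last k) from (congrFun hx.2 a).symm]
    exact Fin.snoc_init_self (x a)
  · intro y hy
    funext a
    simp [Fin.init_snoc]

lemma sum_piFinset_two {M : Type*} [AddCommMonoid M] (s : Finset ℤ) (h : (Fin 2 → ℤ) → M) :
    ∑ p ∈ Fintype.piFinset (fun _ : Fin 2 => s), h p = ∑ a ∈ s, ∑ b ∈ s, h ![a, b] := by
  rw [← Finset.sum_product']
  apply Finset.sum_nbij' (i := fun p => (p 0, p 1)) (j := fun q => ![q.1, q.2])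
  · intro p hp
    simp only [Fintype.mem_piFinset] at hp
    simp [Finset.mem_product, hp 0, hp 1]
  · intro q hq
    simp only [Finset.mem_product] at hq
    simp only [Fintype.mem_piFinset]
    intro a; fin_cases a <;> simp [hq.1, hq.2]
  · intro p hp; funext a; fin_cases a <;> simp
  · intro q hq; simp
  · intro p hp
    congr 1
    funext a; fin_cases a <;> simp

lemma sum_Icc_int {M : Type*} [AddCommMonoid M] (t : ℕ) (g : ℤ → M) :
    ∑ a ∈ Finset.Icc (0:ℤ) (t:ℤ), g a = ∑ m ∈ Finset.range (t+1), g (m:ℤ) := by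
  rw [show Finset.Icc (0:ℤ) (t:ℤ)
      = (Finset.range (t+1)).map ⟨((↑) : ℕ → ℤ), Nat.cast_injective⟩ by
    ext x
    simp only [Finset.mem_map, Finset.mem_range, Finset.mem_Icc, Function.Embedding.coeFn_mk]
    constructor
    · intro hx; exact ⟨x.toNat, by omega, by omega⟩
    · rintro ⟨m, hm, rfl⟩; omega]
  rw [Finset.sum_map]
  rfl

lemma minsum (g : ℕ → ℕ) (t : ℕ) :
    ∑ a ∈ Finset.range (t+1), ∑ b ∈ Finset.range (t+1), g (min a b)
      = ∑ m ∈ Finset.range (t+1), (2*(t-m)+1) * g m := by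
  induction t with
  | zero => simp
  | succ t ih =>
    have e1 : ∑ a ∈ Finset.range (t+1), ∑ b ∈ Finset.range (t+1+1), g (min a b)
        = (∑ a ∈ Finset.range (t+1), ∑ b ∈ Finset.range (t+1), g (min a b))
          + ∑ a ∈ Finset.range (t+1), g a := by
      rw [← Finset.sum_add_distrib]
      refine Finset.sum_congr rfl fun a ha => ?_
      rw [Finset.sum_range_succ, min_eq_left (by rw [Finset.mem_range] at ha; omega)]
    have e2 : ∑ b ∈ Finset.range (t+1+1), g (min (t+1) b)
        = (∑ b ∈ Finset.range (t+1), g b) + g (t+1) := by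
      rw [Finset.sum_range_succ, min_self]
      congr 1
      refine Finset.sum_congr rfl fun b hb => ?_
      rw [min_eq_right (by rw [Finset.mem_range] at hb; omega)]
    have e3 : ∑ m ∈ Finset.range (t+1), (2*(t+1-m)+1) * g m
        = (∑ m ∈ Finset.range (t+1), (2*(t-m)+1) * g m)
          + ((∑ m ∈ Finset.range (t+1), g m) + ∑ m ∈ Finset.range (t+1), g m) := by
      rw [← Finset.sum_add_distrib, ← Finset.sum_add_distrib]
      refine Finset.sum_congr rfl fun m hm => ?_
      rw [Finset.mem_range] at hm
      have : 2*(t+1-m)+1 = (2*(t-m)+1) + (1 + 1) := by omega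
      rw [this, add_mul]; ring
    calc ∑ a ∈ Finset.range (t+1+1), ∑ b ∈ Finset.range (t+1+1), g (min a b)
        = (∑ a ∈ Finset.range (t+1), ∑ b ∈ Finset.range (t+1+1), g (min a b))
          + ∑ b ∈ Finset.range (t+1+1), g (min (t+1) b) := Finset.sum_range_succ _ _
      _ = ((∑ a ∈ Finset.range (t+1), ∑ b ∈ Finset.range (t+1), g (min a b))
            + ∑ a ∈ Finset.range (t+1), g a)
          + ((∑ b ∈ Finset.range (t+1), g b) + g (t+1)) := by rw [e1, e2]
      _ = (∑ m ∈ Finset.range (t+1), (2*(t+1-m)+1) * g m) + (2*(t+1-(t+1))+1) * g (t+1) := by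
            rw [ih, e3, show 2 * (t + 1 - (t + 1)) + 1 = 1 by omega, one_mul]
            omega
      _ = ∑ m ∈ Finset.range (t+1+1), (2*(t+1-m)+1) * g m := (Finset.sum_range_succ _ _).symm

lemma FF_card_succ (k t : ℕ) :
    (FF (k+1) (t:ℤ)).card = ∑ m ∈ Finset.range (t+1), (2*(t-m)+1) * (FF k (m:ℤ)).card := by
  classical
  rw [Finset.card_eq_sum_card_fiberwise
      (f := fun x => fun a => x a (Fin.last k))
      (t := Fintype.piFinset fun _ : Fin 2 => Finset.Icc (0:ℤ) (t:ℤ))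
      (fun x hx => by
        rw [Finset.mem_coe, mem_FF] at hx
        simp only [Finset.mem_coe, Fintype.mem_piFinset, Finset.mem_Icc]
        exact fun a => hx.1 a (Fin.last k))]
  rw [Finset.sum_congr rfl (fun p hp => FF_fiber_card k t p (by
      simp only [Fintype.mem_piFinset, Finset.mem_Icc] at hp; exact hp))]
  rw [sum_piFinset_two (Finset.Icc (0:ℤ) (t:ℤ)) (fun p => (FF k (min (p 0) (p 1))).card)]
  have hmb : ∀ a b : ℤ, (FF k (min (![a, b] 0) (![a, b] 1))).card = (FF k (min a b)).card := by
    intro a b; simp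
  simp only [hmb]
  rw [sum_Icc_int t (fun a => ∑ b ∈ Finset.Icc (0:ℤ) (t:ℤ), (FF k (min a b)).card)]
  refine Eq.trans (Finset.sum_congr rfl fun a _ => ?_) (minsum (fun m => (FF k (m:ℤ)).card) t)
  refine Eq.trans (sum_Icc_int t (fun b => (FF k ((a:ℤ) ⊓ b)).card)) ?_
  exact Finset.sum_congr rfl fun b _ => by rw [Nat.cast_min]

lemma osxm_zero (f : PowerSeries ℚ) :
    (PowerSeries.coeff 0) ((1 - PowerSeries.X) * f) = PowerSeries.coeff 0 f := by
  simp [sub_mul]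

lemma osxm_succ (f : PowerSeries ℚ) (n : ℕ) :
    (PowerSeries.coeff (n+1)) ((1 - PowerSeries.X) * f)
      = PowerSeries.coeff (n+1) f - PowerSeries.coeff n f := by
  rw [sub_mul, one_mul, map_sub]
  congr 1
  rw [mul_comm, PowerSeries.coeff_succ_mul_X]

lemma key0 : (1 - PowerSeries.X : PowerSeries ℚ) * PowerSeries.mk (fun _ => (1:ℚ)) = 1 := by
  ext n
  cases n with
  | zero => simp [osxm_zero]
  | succ n => rw [osxm_succ]; simp

lemma key1 : ((1 - PowerSeries.X) ^ 2 : PowerSeries ℚ)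
    * PowerSeries.mk (fun n => (2*n+1 : ℚ)) = 1 + PowerSeries.X := by
  rw [sq, mul_assoc]
  ext n
  match n with
  | 0 => rw [osxm_zero, osxm_zero]; simp
  | 1 => rw [osxm_succ, osxm_succ, osxm_zero]; simp; norm_num
  | (n+2) =>
    rw [osxm_succ, osxm_succ, osxm_succ]
    simp only [map_add, PowerSeries.coeff_one, PowerSeries.coeff_X, PowerSeries.coeff_mk]
    norm_num
    push_cast
    ring

lemma conv (a b : ℕ → ℚ) :
    PowerSeries.mk a * PowerSeries.mk b
      = PowerSeries.mk (fun n => ∑ m ∈ Finset.range (n+1), a m * b (n - m)) := by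
  ext n
  rw [PowerSeries.coeff_mul, PowerSeries.coeff_mk]
  rw [Finset.Nat.sum_antidiagonal_eq_sum_range_succ (fun i j => (PowerSeries.coeff i) (PowerSeries.mk a) * (PowerSeries.coeff j) (PowerSeries.mk b)) n]
  simp

lemma FF_gen (k : ℕ) :
    (1 - PowerSeries.X : PowerSeries ℚ) ^ (2 * k + 1)
      * PowerSeries.mk (fun t => ((FF k (t:ℤ)).card : ℚ))
    = (1 + PowerSeries.X) ^ k := by
  induction k with
  | zero =>
    have h1 : PowerSeries.mk (fun t : ℕ => ((FF 0 (t:ℤ)).card : ℚ))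
        = PowerSeries.mk (fun _ => (1:ℚ)) :=
      congrArg PowerSeries.mk (funext fun t => by rw [FF_zero_card]; norm_num)
    simp only [Nat.mul_zero, Nat.zero_add, pow_zero, pow_one, h1]
    exact key0
  | succ k ih =>
    have hmk : PowerSeries.mk (fun t : ℕ => ((FF (k+1) (t:ℤ)).card : ℚ))
        = PowerSeries.mk (fun t : ℕ => ((FF k (t:ℤ)).card : ℚ))
          * PowerSeries.mk (fun n : ℕ => (2*n+1 : ℚ)) := by
      rw [conv]
      refine congrArg PowerSeries.mk (funext fun t => ?_)
      rw [FF_card_succ, Nat.cast_sum]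
      refine Finset.sum_congr rfl fun m hm => ?_
      push_cast
      ring
    rw [hmk, show 2*(k+1)+1 = (2*k+1)+2 from by ring, pow_add, mul_mul_mul_comm, ih, key1,
      pow_succ]

/-- The `h*`-polynomial of the order polytope of the ordinal sum of `k` two-element
antichains is `(1+z)^k`:  `(1-z)^{2k+1} · Σ_t i(t) z^t = (1+z)^k`. -/
theorem stmt_9 (k : ℕ) (hk : 1 ≤ k) (i : ℕ → ℕ)
    (hi : ∀ t : ℕ, i t = {x : Fin 2 → Fin k → ℤ |
      (∀ a j, 0 ≤ x a j ∧ x a j ≤ (t : ℤ)) ∧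
      ∀ a j a' j', j < j' → x a j ≤ x a' j'}.ncard) :
    (1 - PowerSeries.X : PowerSeries ℚ) ^ (2 * k + 1) *
      PowerSeries.mk (fun t => (i t : ℚ)) =
    (1 + PowerSeries.X) ^ k := by
  have hmk : PowerSeries.mk (fun t : ℕ => (i t : ℚ))
      = PowerSeries.mk (fun t : ℕ => ((FF k (t:ℤ)).card : ℚ)) := by
    refine congrArg PowerSeries.mk (funext fun t => ?_)
    rw [hi t, show {x : Fin 2 → Fin k → ℤ |
      (∀ a j, 0 ≤ x a j ∧ x a j ≤ (t : ℤ)) ∧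
      ∀ a j a' j', j < j' → x a j ≤ x a' j'} = ↑(FF k (t:ℤ)) from
      Set.ext fun x => by rw [Set.mem_setOf_eq, Finset.mem_coe, mem_FF],
      Set.ncard_coe_finset]
  rw [hmk]
  exact FF_gen k
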